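/- arXiv:2509.01639 — 10 statements merged into one kernel-verified Lean document; each statement's English description precedes it below -/
import Mathlib

section
/- Let Ψ be an invertible n×n real matrix whose symmetric part Ψ^s is invertible. Then the symmetric part (Ψ⁻¹)^s of Ψ⁻¹ is invertible, and ((Ψ⁻¹)^s)⁻¹ = Ψᵀ (Ψ^s)⁻¹ Ψ = Ψ^s − Ψ^a (Ψ^s)⁻¹ Ψ^a. -/
open Matrix

/-- The symmetric part of a square real matrix: `Mˢ = (M + Mᵀ)/2`. -/
noncomputable def symPart {n : ℕ} (M : Matrix (Fin n) (Fin n) ℝ) : Matrix (Fin n) (Fin n) ℝ :=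
  (2:ℝ)⁻¹ • (M + Mᵀ)

/-- The antisymmetric part of a square real matrix: `Mᵃ = (M - Mᵀ)/2`. -/
noncomputable def skewPart {n : ℕ} (M : Matrix (Fin n) (Fin n) ℝ) : Matrix (Fin n) (Fin n) ℝ :=
  (2:ℝ)⁻¹ • (M - Mᵀ)

/-- For an invertible real matrix `Ψ` with invertible symmetric part `Ψˢ`, the symmetric part
`(Ψ⁻¹)ˢ` of `Ψ⁻¹` is invertible, and
`((Ψ⁻¹)ˢ)⁻¹ = Ψᵀ (Ψˢ)⁻¹ Ψ = Ψˢ − Ψᵃ (Ψˢ)⁻¹ Ψᵃ`. -/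
theorem stmt2 {n : ℕ} (Ψ : Matrix (Fin n) (Fin n) ℝ) (hΨ : IsUnit Ψ)
    (hΨs : IsUnit (symPart Ψ)) :
    IsUnit (symPart Ψ⁻¹) ∧
    (symPart Ψ⁻¹)⁻¹ = Ψᵀ * (symPart Ψ)⁻¹ * Ψ ∧
    (symPart Ψ⁻¹)⁻¹ = symPart Ψ - skewPart Ψ * (symPart Ψ)⁻¹ * skewPart Ψ := by
  have hd : IsUnit Ψ.det := (isUnit_iff_isUnit_det Ψ).mp hΨ
  have hdT : IsUnit Ψᵀ.det := by rwa [det_transpose]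
  have hds : IsUnit (symPart Ψ).det := (isUnit_iff_isUnit_det _).mp hΨs
  have key : symPart Ψ⁻¹ = Ψ⁻¹ * symPart Ψ * Ψᵀ⁻¹ := by
    unfold symPart
    rw [transpose_nonsing_inv]
    rw [Matrix.mul_smul, Matrix.smul_mul, mul_add,
      Matrix.nonsing_inv_mul _ hd, add_mul, Matrix.one_mul,
      Matrix.mul_nonsing_inv_cancel_right _ _ hdT, add_comm]
  have hu : IsUnit (symPart Ψ⁻¹) := by
    rw [key]
    have h1 : IsUnit Ψ⁻¹ := (isUnit_iff_isUnit_det _).mpr (by rw [det_nonsing_inv]; exact isUnit_ringInverse.mpr hd)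
    have h2 : IsUnit Ψᵀ⁻¹ := (isUnit_iff_isUnit_det _).mpr (by rw [det_nonsing_inv]; exact isUnit_ringInverse.mpr hdT)
    exact (h1.mul hΨs).mul h2
  have e2 : (symPart Ψ⁻¹)⁻¹ = Ψᵀ * (symPart Ψ)⁻¹ * Ψ := by
    rw [key, Matrix.mul_inv_rev, Matrix.mul_inv_rev,
      Matrix.nonsing_inv_nonsing_inv _ hdT, Matrix.nonsing_inv_nonsing_inv _ hd, mul_assoc]
  refine ⟨hu, e2, ?_⟩
  rw [e2]
  set S := symPart Ψ with hS
  set A := skewPart Ψ with hA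
  have hSA : S + A = Ψ := by rw [hS, hA]; unfold symPart skewPart; module
  have hST : S - A = Ψᵀ := by rw [hS, hA]; unfold symPart skewPart; module
  rw [← hST, ← hSA, sub_mul, Matrix.mul_nonsing_inv _ hds, sub_mul, Matrix.one_mul,
    mul_add, Matrix.nonsing_inv_mul_cancel_right _ _ hds]
  abel
end

section
/- Let S be a symmetric positive definite n×n real matrix and A an antisymmetric n×n real matrix. Then S + A is invertible, the symmetric part ((S+A)⁻¹)^s of (S+A)⁻¹ is positive definite, and (((S+A)⁻¹)^s)⁻¹ = S − A S⁻¹ A. -/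
open Matrix

/-- Let `S` be a symmetric positive definite real matrix and `A` antisymmetric.  Then `S + A`
is invertible, the symmetric part of `(S + A)⁻¹` is positive definite, and
`(((S+A)⁻¹)ˢ)⁻¹ = S − A S⁻¹ A`. -/
theorem stmt3 {n : ℕ} (S A : Matrix (Fin n) (Fin n) ℝ)
    (hS : S.PosDef) (hA : Aᵀ = -A) :
    IsUnit (S + A) ∧
    (symPart (S + A)⁻¹).PosDef ∧
    (symPart (S + A)⁻¹)⁻¹ = S - A * S⁻¹ * A := by
  classical
  have hSsym : Sᵀ = S := by
    rw [← Matrix.conjTranspose_eq_transpose_of_trivial]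
    exact hS.1
  -- antisymmetric quadratic form vanishes
  have hAq : ∀ v : Fin n → ℝ, v ⬝ᵥ A *ᵥ v = 0 := by
    intro v
    have h1 : v ⬝ᵥ A *ᵥ v = (Aᵀ *ᵥ v) ⬝ᵥ v := by
      rw [Matrix.dotProduct_mulVec, Matrix.mulVec_transpose]
    rw [hA, Matrix.neg_mulVec, neg_dotProduct, dotProduct_comm] at h1
    have h0 : A *ᵥ v ⬝ᵥ v = 0 := by linarith
    rw [dotProduct_comm]
    exact h0
  -- det (S + A) ≠ 0
  have hdet : (S + A).det ≠ 0 := by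
    intro h
    obtain ⟨v, hv, hmv⟩ := (Matrix.exists_mulVec_eq_zero_iff).mpr h
    have hpos := hS.dotProduct_mulVec_pos hv
    rw [star_trivial] at hpos
    have : v ⬝ᵥ (S + A) *ᵥ v = v ⬝ᵥ S *ᵥ v := by
      rw [Matrix.add_mulVec, dotProduct_add, hAq, add_zero]
    rw [hmv, dotProduct_zero] at this
    rw [← this] at hpos
    exact lt_irrefl _ hpos
  have hUnit : IsUnit (S + A) := (Matrix.isUnit_iff_isUnit_det _).2 hdet.isUnit
  have hT : (S + A)ᵀ = S - A := by
    rw [transpose_add, hSsym, hA, sub_eq_add_neg]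
  have hdetT : (S - A).det ≠ 0 := by
    rw [← hT, det_transpose]; exact hdet
  have hinvT : ((S + A)⁻¹)ᵀ = (S - A)⁻¹ := by
    rw [Matrix.transpose_nonsing_inv, hT]
  have hSdet : S.det ≠ 0 := hS.det_pos.ne'
  have h1 := Matrix.mul_nonsing_inv (S - A) (hdetT.isUnit)
  have h2 := Matrix.nonsing_inv_mul (S + A) (hdet.isUnit)
  have hsum : (S + A)⁻¹ + (S - A)⁻¹ = (S + A)⁻¹ * (S + S) * (S - A)⁻¹ := by
    have hss : S + S = (S - A) + (S + A) := by abel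
    rw [hss, mul_add, add_mul, Matrix.mul_assoc _ (S - A) _, h1, mul_one,
      h2, one_mul]
  have hkey : symPart (S + A)⁻¹ = (S + A)⁻¹ * S * (S - A)⁻¹ := by
    unfold symPart
    rw [hinvT, hsum]
    have hss : S + S = (2:ℝ) • S := by rw [two_smul]
    rw [hss, mul_smul_comm, smul_mul_assoc, smul_smul]
    norm_num
  -- positive definiteness
  have hPD : (symPart (S + A)⁻¹).PosDef := by
    rw [hkey, ← hinvT]
    refine Matrix.posDef_iff_dotProduct_mulVec.mpr ⟨?_, ?_⟩
    · show _ᴴ = _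
      rw [Matrix.conjTranspose_eq_transpose_of_trivial, transpose_mul, transpose_mul,
        transpose_transpose, hSsym, Matrix.mul_assoc]
    · intro x hx
      set B := (S + A)⁻¹ with hB
      have hBu : IsUnit B := Matrix.isUnit_nonsing_inv_iff.mpr hUnit
      have hBTu : IsUnit Bᵀ := (Matrix.isUnit_iff_isUnit_det _).2
        (by rw [det_transpose]; exact (Matrix.isUnit_iff_isUnit_det _).1 hBu)
      have hy : Bᵀ *ᵥ x ≠ 0 := by
        intro h
        exact hx (Matrix.mulVec_injective_iff_isUnit.mpr hBTu (by rw [h, Matrix.mulVec_zero]))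
      have hpos := hS.dotProduct_mulVec_pos hy
      rw [star_trivial] at hpos
      rw [star_trivial]
      have : x ⬝ᵥ (B * S * Bᵀ) *ᵥ x = (Bᵀ *ᵥ x) ⬝ᵥ S *ᵥ (Bᵀ *ᵥ x) := by
        rw [← Matrix.mulVec_mulVec, ← Matrix.mulVec_mulVec, Matrix.dotProduct_mulVec,
          ← Matrix.mulVec_transpose]
      rw [this]
      exact hpos
  refine ⟨hUnit, hPD, ?_⟩
  rw [hkey, Matrix.mul_inv_rev, Matrix.mul_inv_rev,
    Matrix.nonsing_inv_nonsing_inv _ (hdetT.isUnit),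
    Matrix.nonsing_inv_nonsing_inv _ (hdet.isUnit)]
  have e1 : S * S⁻¹ = 1 := Matrix.mul_nonsing_inv _ hSdet.isUnit
  have e2 : S⁻¹ * S = 1 := Matrix.nonsing_inv_mul _ hSdet.isUnit
  calc (S - A) * (S⁻¹ * (S + A)) = (S - A) * (S⁻¹ * S + S⁻¹ * A) := by rw [mul_add]
    _ = (S - A) * (1 + S⁻¹ * A) := by rw [e2]
    _ = S - A * S⁻¹ * A := by
        rw [mul_add, mul_one, sub_mul, ← Matrix.mul_assoc S, e1, one_mul,
          ← Matrix.mul_assoc A]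
        abel
end

section
/- Let S be a symmetric positive definite n×n real matrix and A an invertible antisymmetric n×n real matrix. Then both S + A and A S⁻¹ A + A are invertible, and the symmetric parts of their inverses satisfy ((S + A)⁻¹)^s = −((A S⁻¹ A + A)⁻¹)^s. -/
open Matrix

lemma aux_isUnit_add {n : ℕ} (S A : Matrix (Fin n) (Fin n) ℝ)
    (hS : S.PosDef) (hA : Aᵀ = -A) : IsUnit (S + A) := by
  rw [Matrix.isUnit_iff_isUnit_det, isUnit_iff_ne_zero]
  intro hdet
  obtain ⟨x, hx, hx0⟩ := (Matrix.exists_mulVec_eq_zero_iff).mpr hdet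
  have hAx : x ⬝ᵥ A *ᵥ x = 0 := by
    have h1 : x ⬝ᵥ A *ᵥ x = (Aᵀ *ᵥ x) ⬝ᵥ x := by
      rw [Matrix.dotProduct_mulVec, Matrix.mulVec_transpose]
    rw [hA] at h1
    simp only [Matrix.neg_mulVec, neg_dotProduct] at h1
    rw [dotProduct_comm (A *ᵥ x) x] at h1
    linarith
  have hpos : 0 < x ⬝ᵥ S *ᵥ x := by
    have := hS.dotProduct_mulVec_pos hx
    simpa using this
  have : x ⬝ᵥ (S + A) *ᵥ x = 0 := by rw [hx0]; simp
  rw [Matrix.add_mulVec, dotProduct_add, hAx] at this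
  linarith

/-- Let `S` be a symmetric positive definite real matrix and `A` an invertible antisymmetric
matrix.  Then both `S + A` and `A S⁻¹ A + A` are invertible, and the symmetric parts of their
inverses satisfy `((S + A)⁻¹)ˢ = −((A S⁻¹ A + A)⁻¹)ˢ`. -/
theorem stmt4 {n : ℕ} (S A : Matrix (Fin n) (Fin n) ℝ)
    (hS : S.PosDef) (hA : Aᵀ = -A) (hAu : IsUnit A) :
    IsUnit (S + A) ∧
    IsUnit (A * S⁻¹ * A + A) ∧
    symPart (S + A)⁻¹ = -symPart (A * S⁻¹ * A + A)⁻¹ := by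
  have hSd : IsUnit S.det := hS.det_pos.ne'.isUnit
  have hSAu : IsUnit (S + A) := aux_isUnit_add S A hS hA
  have hSAd : IsUnit (S + A).det := (Matrix.isUnit_iff_isUnit_det _).mp hSAu
  have hAd : IsUnit A.det := (Matrix.isUnit_iff_isUnit_det _).mp hAu
  have hSt : Sᵀ = S := by simpa using hS.1.eq
  have hSmAu : IsUnit (S - A) := by
    have := aux_isUnit_add S (-A) hS (by rw [transpose_neg, hA])
    simpa [sub_eq_add_neg] using this
  have hSmAd : IsUnit (S - A).det := (Matrix.isUnit_iff_isUnit_det _).mp hSmAu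
  have hB : A * S⁻¹ * A + A = A * S⁻¹ * (S + A) := by
    rw [Matrix.mul_add, Matrix.mul_assoc A S⁻¹ S, Matrix.nonsing_inv_mul S hSd,
      Matrix.mul_one, add_comm]
  have hBu : IsUnit (A * S⁻¹ * A + A) := by
    rw [hB]; exact (hAu.mul hS.inv.isUnit).mul hSAu
  have hnegA : (-A)⁻¹ = -A⁻¹ := Matrix.inv_eq_right_inv
    (by rw [Matrix.neg_mul, Matrix.mul_neg, neg_neg, Matrix.mul_nonsing_inv A hAd])
  have hMT : ((S + A)⁻¹)ᵀ = (S - A)⁻¹ := by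
    rw [Matrix.transpose_nonsing_inv, transpose_add, hSt, hA, sub_eq_add_neg]
  have hN : (A * S⁻¹ * A + A)⁻¹ = A⁻¹ - (S + A)⁻¹ := by
    rw [hB, Matrix.mul_inv_rev, Matrix.mul_inv_rev, Matrix.nonsing_inv_nonsing_inv S hSd]
    have h1 : S * A⁻¹ = (S + A) * A⁻¹ - 1 := by
      rw [Matrix.add_mul, Matrix.mul_nonsing_inv A hAd]; abel
    rw [h1, Matrix.mul_sub, ← Matrix.mul_assoc, Matrix.nonsing_inv_mul _ hSAd,
      Matrix.one_mul, Matrix.mul_one]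
  have hNT : ((A * S⁻¹ * A + A)⁻¹)ᵀ = -A⁻¹ - (S - A)⁻¹ := by
    rw [hN, transpose_sub, Matrix.transpose_nonsing_inv, Matrix.transpose_nonsing_inv,
      hA, hnegA, transpose_add, hSt, hA, sub_eq_add_neg S A]
  refine ⟨hSAu, hBu, ?_⟩
  rw [symPart, symPart, hMT, hNT, hN, ← smul_neg]
  congr 1
  abel
end

section
/- Let S be a symmetric positive definite n×n real matrix and A an antisymmetric n×n real matrix. Then det(S + A) ≥ det(S) > 0; in particular det(Id + S⁻¹ A) ≥ 1 and S + A is invertible. -/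
open Matrix

private lemma skew_quad {n : ℕ} {A : Matrix (Fin n) (Fin n) ℝ} (hA : Aᵀ = -A)
    (x : Fin n → ℝ) : x ⬝ᵥ A *ᵥ x = 0 := by
  have h1 : x ⬝ᵥ Aᵀ *ᵥ x = A *ᵥ x ⬝ᵥ x := by
    rw [Matrix.dotProduct_mulVec, Matrix.vecMul_transpose]
  rw [hA] at h1
  have h2 : A *ᵥ x ⬝ᵥ x = x ⬝ᵥ A *ᵥ x := dotProduct_comm _ _
  simp only [Matrix.neg_mulVec, dotProduct_neg] at h1
  linarith [h1, h2]

private lemma det_ne_zero_aux {n : ℕ} {S A : Matrix (Fin n) (Fin n) ℝ}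
    (hS : S.PosDef) (hA : Aᵀ = -A) (t : ℝ) : (S + t • A).det ≠ 0 := by
  intro h
  obtain ⟨v, hvne, hmv⟩ := (Matrix.exists_mulVec_eq_zero_iff).2 h
  have h0 : v ⬝ᵥ (S + t • A) *ᵥ v = 0 := by rw [hmv, dotProduct_zero]
  rw [add_mulVec, dotProduct_add, Matrix.smul_mulVec, dotProduct_smul] at h0
  rw [skew_quad hA v] at h0
  have hpos : 0 < v ⬝ᵥ S *ᵥ v := by simpa using hS.dotProduct_mulVec_pos hvne
  simp only [smul_eq_mul, mul_zero, add_zero] at h0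
  linarith

private lemma det_one_add_psd {m : Type*} [Fintype m] [DecidableEq m]
    {Q : Matrix m m ℝ} (hQ : Q.PosSemidef) : 1 ≤ (1 + Q).det := by
  have hH : (1 + Q).IsHermitian := (Matrix.isHermitian_one).add hQ.1
  have heig : ∀ i, 1 ≤ hH.eigenvalues i := by
    intro i
    set v : m → ℝ := ⇑(hH.eigenvectorBasis i) with hv
    have hmv : (1 + Q) *ᵥ v = hH.eigenvalues i • v := hH.mulVec_eigenvectorBasis i
    have hvne : v ≠ 0 := by
      have h := hH.eigenvectorBasis.orthonormal.ne_zero i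
      intro hc
      exact h (by ext j; exact congrFun hc j)
    have hQv : Q *ᵥ v = (hH.eigenvalues i - 1) • v := by
      have h1 : (1 + Q) *ᵥ v = v + Q *ᵥ v := by rw [add_mulVec, one_mulVec]
      rw [h1] at hmv
      have h2 : Q *ᵥ v = hH.eigenvalues i • v - v := eq_sub_of_add_eq' hmv
      rw [h2, sub_smul, one_smul]
    have h0 : 0 ≤ v ⬝ᵥ Q *ᵥ v := by simpa using hQ.dotProduct_mulVec_nonneg v
    rw [hQv, dotProduct_smul, smul_eq_mul] at h0
    have hvv : 0 < v ⬝ᵥ v := by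
      simpa using Matrix.dotProduct_self_star_pos_iff.mpr hvne
    nlinarith
  have hprod : (1:ℝ) ≤ ∏ i, hH.eigenvalues i := by
    calc (1:ℝ) = ∏ _i : m, (1:ℝ) := by simp
      _ ≤ ∏ i, hH.eigenvalues i :=
        Finset.prod_le_prod (fun _ _ => zero_le_one) (fun i _ => heig i)
  rw [hH.det_eq_prod_eigenvalues]
  exact_mod_cast hprod

open scoped MatrixOrder in
private lemma det_le_det_add_psd {m : Type*} [Fintype m] [DecidableEq m]
    {S P : Matrix m m ℝ} (hS : S.PosDef) (hP : P.PosSemidef) :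
    S.det ≤ (S + P).det := by
  set T := CFC.sqrt S with hT
  have hTpsd : T.PosSemidef := (CFC.sqrt_nonneg S).posSemidef
  have hTT : T * T = S := CFC.sqrt_mul_sqrt_self S hS.posSemidef.nonneg
  have hdT : T.det * T.det = S.det := by rw [← det_mul, hTT]
  have hdS := hS.det_pos
  have hTdet : IsUnit T.det := by
    refine isUnit_iff_ne_zero.2 fun h => ?_
    rw [h, mul_zero] at hdT
    exact hdS.ne' hdT.symm
  have h1 : T * T⁻¹ = 1 := mul_nonsing_inv _ hTdet
  have h2 : T⁻¹ * T = 1 := nonsing_inv_mul _ hTdet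
  have hQ : ((T⁻¹)ᴴ * P * T⁻¹).PosSemidef := hP.conjTranspose_mul_mul_same _
  have hTinvH : (T⁻¹)ᴴ = T⁻¹ := by rw [conjTranspose_nonsing_inv, hTpsd.1]
  rw [hTinvH] at hQ
  have key : T * (1 + T⁻¹ * P * T⁻¹) * T = S + P := by
    have hexp : T * (1 + T⁻¹ * P * T⁻¹) * T
        = T * T + (T * T⁻¹) * P * (T⁻¹ * T) := by noncomm_ring
    rw [hexp, h1, h2, one_mul, mul_one, hTT]
  have hle := det_one_add_psd hQ
  have hdSP : (S + P).det = T.det * (1 + T⁻¹ * P * T⁻¹).det * T.det := by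
    rw [← key, det_mul, det_mul]
  rw [hdSP]
  nlinarith

/-- For `S` symmetric positive definite and `A` antisymmetric:
`det (S + A) ≥ det S > 0`, `det (Id + S⁻¹ A) ≥ 1`, and `S + A` is invertible. -/
theorem stmt6 {n : ℕ} (S A : Matrix (Fin n) (Fin n) ℝ)
    (hS : S.PosDef) (hA : Aᵀ = -A) :
    S.det ≤ (S + A).det ∧ 0 < S.det ∧ 1 ≤ (1 + S⁻¹ * A).det ∧ IsUnit (S + A) := by
  have hdS := hS.det_pos
  have hSu : IsUnit S.det := hdS.ne'.isUnit
  have hSinv : S * S⁻¹ = 1 := mul_nonsing_inv _ hSu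
  have hinvS : S⁻¹ * S = 1 := nonsing_inv_mul _ hSu
  have hSt : Sᵀ = S := by
    have := hS.1
    rwa [Matrix.IsHermitian, Matrix.conjTranspose_eq_transpose_of_trivial] at this
  -- (S + A).det positive, via IVT
  have hne : ∀ t : ℝ, (S + t • A).det ≠ 0 := det_ne_zero_aux hS hA
  have hSA1 : S + (1 : ℝ) • A = S + A := by rw [one_smul]
  have hpos : 0 < (S + A).det := by
    by_contra h
    push_neg at h
    have hlt : (S + A).det < 0 := lt_of_le_of_ne h (by simpa [hSA1] using hne 1)
    have hf : Continuous fun t : ℝ => (S + t • A).det :=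
      (continuous_const.add (continuous_id.smul continuous_const)).matrix_det
    have hf0 : (fun t : ℝ => (S + t • A).det) 0 = S.det := by simp
    have := intermediate_value_Icc' (by norm_num : (0:ℝ) ≤ 1) hf.continuousOn
    have h0mem : (0 : ℝ) ∈ Set.Icc ((fun t : ℝ => (S + t • A).det) 1)
        ((fun t : ℝ => (S + t • A).det) 0) := by
      constructor
      · simpa [hSA1] using hlt.le
      · simpa using hdS.le
    obtain ⟨t, _, ht⟩ := this h0mem
    exact hne t ht
  -- the key determinant identity
  have hP : (Aᵀ * S⁻¹ * A).PosSemidef := by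
    have := (hS.inv.posSemidef).conjTranspose_mul_mul_same A
    rwa [Matrix.conjTranspose_eq_transpose_of_trivial] at this
  have key : (S + A) * S⁻¹ * (S - A) = S + Aᵀ * S⁻¹ * A := by
    have hexp : (S + A) * S⁻¹ * (S - A)
        = S * S⁻¹ * S - S * S⁻¹ * A + (A * (S⁻¹ * S) - A * S⁻¹ * A) := by noncomm_ring
    rw [hexp, hSinv, hinvS, one_mul, one_mul, mul_one, hA]
    noncomm_ring
  have hTd : (S - A).det = (S + A).det := by
    rw [← det_transpose (S + A), transpose_add, hSt, hA, ← sub_eq_add_neg]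
  have hdinv : S⁻¹.det = S.det⁻¹ := by rw [det_nonsing_inv, Ring.inverse_eq_inv']
  have hsq : (S + A).det * S.det⁻¹ * (S + A).det = (S + Aᵀ * S⁻¹ * A).det := by
    rw [← key, det_mul, det_mul, hdinv, hTd]
  have hge : S.det ≤ (S + Aᵀ * S⁻¹ * A).det := det_le_det_add_psd hS hP
  have hmain : S.det ≤ (S + A).det := by
    rw [← hsq] at hge
    have hc : S.det * S.det⁻¹ = 1 := mul_inv_cancel₀ hdS.ne'
    nlinarith [mul_pos hpos hpos, mul_pos hdS hdS, hge, hc, hpos, hdS]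
  refine ⟨hmain, hdS, ?_, ?_⟩
  · have hid : S⁻¹ * (S + A) = 1 + S⁻¹ * A := by rw [mul_add, hinvS]
    have : (1 + S⁻¹ * A).det = S.det⁻¹ * (S + A).det := by
      rw [← hid, det_mul, hdinv]
    rw [this]
    calc (1:ℝ) = S.det⁻¹ * S.det := (inv_mul_cancel₀ hdS.ne').symm
      _ ≤ S.det⁻¹ * (S + A).det := mul_le_mul_of_nonneg_left hmain (inv_pos.2 hdS).le
  · exact (Matrix.isUnit_iff_isUnit_det _).2 hpos.ne'.isUnit
end

section
/- Let S be a symmetric positive definite n×n real matrix and A an antisymmetric n×n real matrix. Then S + A is invertible and the matrix S⁻¹ − ((S+A)⁻¹)^s is positive semidefinite, where ((S+A)⁻¹)^s denotes the symmetric part of (S+A)⁻¹. -/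
open Matrix

/-- For `S` symmetric positive definite and `A` antisymmetric, `S + A` is invertible and
`S⁻¹ − ((S+A)⁻¹)ˢ` is positive semidefinite. -/
theorem stmt8 {n : ℕ} (S A : Matrix (Fin n) (Fin n) ℝ)
    (hS : S.PosDef) (hA : Aᵀ = -A) :
    IsUnit (S + A) ∧ (S⁻¹ - symPart (S + A)⁻¹).PosSemidef := by
  have hSymm : Sᵀ = S := hS.1
  have hAquad : ∀ x : Fin n → ℝ, x ⬝ᵥ A *ᵥ x = 0 := by
    intro x
    have h1 : x ⬝ᵥ A *ᵥ x = -(x ⬝ᵥ A *ᵥ x) := by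
      calc x ⬝ᵥ A *ᵥ x = A.vecMul x ⬝ᵥ x := dotProduct_mulVec x A x
        _ = (Aᵀ *ᵥ x) ⬝ᵥ x := by rw [mulVec_transpose]
        _ = -((A *ᵥ x) ⬝ᵥ x) := by rw [hA, neg_mulVec, neg_dotProduct]
        _ = -(x ⬝ᵥ A *ᵥ x) := by rw [dotProduct_comm]
    linarith
  -- determinant nonzero
  have hdet : (S + A).det ≠ 0 := by
    intro h
    obtain ⟨v, hv, hv0⟩ := (Matrix.exists_mulVec_eq_zero_iff).2 h
    have hpos := hS.dotProduct_mulVec_pos hv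
    simp only [star_trivial, RCLike.re_to_real] at hpos
    have : v ⬝ᵥ S *ᵥ v = 0 := by
      have : v ⬝ᵥ (S + A) *ᵥ v = 0 := by rw [hv0, dotProduct_zero]
      rw [add_mulVec, dotProduct_add, hAquad] at this
      linarith
    simp [this] at hpos
  have hU : IsUnit (S + A) := (Matrix.isUnit_iff_isUnit_det _).2 hdet.isUnit
  refine ⟨hU, ?_⟩
  set B := S + A with hBdef
  have hBt : Bᵀ = S - A := by rw [hBdef, transpose_add, hSymm, hA, sub_eq_add_neg]
  have hdetS : IsUnit S.det := isUnit_iff_ne_zero.2 hS.det_pos.ne'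
  have hdetB : IsUnit B.det := hdet.isUnit
  have hdetBt : IsUnit Bᵀ.det := by rwa [det_transpose]
  have hSS : S * S⁻¹ = 1 := mul_nonsing_inv S hdetS
  have hBB : B⁻¹ * B = 1 := nonsing_inv_mul B hdetB
  have hBtBt : Bᵀ * (Bᵀ)⁻¹ = 1 := mul_nonsing_inv Bᵀ hdetBt
  have hinvT : (B⁻¹)ᵀ = (Bᵀ)⁻¹ := transpose_nonsing_inv B
  -- the middle identity
  have middle : B * (S⁻¹ - symPart B⁻¹) * Bᵀ = Aᵀ * S⁻¹ * A := by
    have e1 : B * symPart B⁻¹ * Bᵀ = S := by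
      rw [symPart, hinvT]
      rw [Matrix.mul_smul, Matrix.smul_mul, Matrix.mul_add, Matrix.mul_nonsing_inv B hdetB,
        Matrix.add_mul, Matrix.one_mul, Matrix.mul_assoc, Matrix.nonsing_inv_mul Bᵀ hdetBt,
        Matrix.mul_one]
      rw [hBt, hBdef]
      module
    have e2 : B * S⁻¹ * Bᵀ = S + Aᵀ * S⁻¹ * A := by
      rw [hBdef, hBt, hA]
      simp only [Matrix.add_mul, Matrix.mul_sub, hSS, Matrix.one_mul, Matrix.neg_mul,
        Matrix.mul_assoc, Matrix.nonsing_inv_mul S hdetS, Matrix.mul_one]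
      abel
    rw [Matrix.mul_sub, Matrix.sub_mul, e1, e2]
    abel
  have hmain : S⁻¹ - symPart B⁻¹ = B⁻¹ * (Aᵀ * S⁻¹ * A) * (Bᵀ)⁻¹ := by
    have : B⁻¹ * (B * (S⁻¹ - symPart B⁻¹) * Bᵀ) * (Bᵀ)⁻¹ = S⁻¹ - symPart B⁻¹ := by
      rw [Matrix.mul_assoc B, ← Matrix.mul_assoc B⁻¹, hBB, Matrix.one_mul,
        Matrix.mul_assoc, hBtBt, Matrix.mul_one]
    rw [← this, middle]
  rw [hmain]
  have h1 : (Aᵀ * S⁻¹ * A).PosSemidef := by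
    have := (hS.inv.posSemidef).mul_mul_conjTranspose_same Aᵀ
    simpa using this
  have h2 := h1.mul_mul_conjTranspose_same B⁻¹
  simpa [hinvT] using h2
end

section
/- Let Ψ be an invertible n×n real matrix. Then Ψ^s · (Ψ⁻¹)^s · Ψ^s = Ψ^s + Ψ^a · (Ψ⁻¹)^s · Ψ^a, where Ψ^s, Ψ^a are the symmetric and antisymmetric parts of Ψ and (Ψ⁻¹)^s is the symmetric part of Ψ⁻¹. -/
open Matrix

/-- For an invertible real matrix `Ψ`:
`Ψˢ · (Ψ⁻¹)ˢ · Ψˢ = Ψˢ + Ψᵃ · (Ψ⁻¹)ˢ · Ψᵃ`. -/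
theorem stmt9 {n : ℕ} (Ψ : Matrix (Fin n) (Fin n) ℝ) (hΨ : IsUnit Ψ) :
    symPart Ψ * symPart Ψ⁻¹ * symPart Ψ =
      symPart Ψ + skewPart Ψ * symPart Ψ⁻¹ * skewPart Ψ := by
  have hd : IsUnit Ψ.det := (Matrix.isUnit_iff_isUnit_det Ψ).mp hΨ
  have h1 : Ψ * Ψ⁻¹ = 1 := Matrix.mul_nonsing_inv Ψ hd
  have h2 : Ψ⁻¹ * Ψ = 1 := Matrix.nonsing_inv_mul Ψ hd
  have h3 : Ψᵀ * Ψ⁻¹ᵀ = 1 := by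
    rw [← Matrix.transpose_mul, h2, Matrix.transpose_one]
  have h4 : Ψ⁻¹ᵀ * Ψᵀ = 1 := by
    rw [← Matrix.transpose_mul, h1, Matrix.transpose_one]
  have e1 : Ψ * (Ψ⁻¹ * Ψᵀ) = Ψᵀ := by rw [← mul_assoc, h1, one_mul]
  have e2 : Ψ * (Ψ⁻¹ᵀ * Ψᵀ) = Ψ := by rw [h4, mul_one]
  have e3 : Ψᵀ * (Ψ⁻¹ * Ψ) = Ψᵀ := by rw [h2, mul_one]
  have e4 : Ψᵀ * (Ψ⁻¹ᵀ * Ψ) = Ψ := by rw [← mul_assoc, h3, one_mul]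
  have e5 : Ψ * (Ψ⁻¹ * Ψ) = Ψ := by rw [h2, mul_one]
  simp only [symPart, skewPart, Matrix.smul_mul, Matrix.mul_smul, smul_smul,
    Matrix.mul_add, Matrix.add_mul, Matrix.mul_sub, Matrix.sub_mul, mul_assoc,
    e1, e2, e3, e4, e5]
  module
end

section
/- Let U, V ⊆ ℝⁿ be open sets, let u : U → ℝ be a C² function with Hess u(x) positive definite for all x ∈ U, and suppose ∇u maps U bijectively onto V with C¹ inverse G : V → U. Let φ : V → ℝ be the Legendre transform φ(y) = ⟨G(y), y⟩ − u(G(y)). Suppose there are b, c ∈ ℝⁿ and κ ∈ ℝ such that ⟨b, x⟩ = ⟨c, ∇u(x)⟩ + log det Hess u(x) + κ for all x ∈ U. Then ⟨c, y⟩ = ⟨b, ∇φ(y)⟩ + log det Hess φ(y) − κ for all y ∈ V; that is, the Legendre transform satisfies the same steady Kähler–Ricci soliton Monge–Ampère equation with the roles of the constants b and c interchanged. -/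
open Matrix

/-- The gradient of `u : ℝⁿ → ℝ`: `(grad u x) i` is the `i`-th partial derivative of `u` at
`x` (junk if `u` is not differentiable at `x`). -/
noncomputable def grad {n : ℕ} (u : (Fin n → ℝ) → ℝ) (x : Fin n → ℝ) : Fin n → ℝ :=
  fun i => fderiv ℝ u x (Pi.single i 1)

/-- The Hessian matrix of second partial derivatives of `u : ℝⁿ → ℝ` at `x`. -/
noncomputable def hess {n : ℕ} (u : (Fin n → ℝ) → ℝ) (x : Fin n → ℝ) :
    Matrix (Fin n) (Fin n) ℝ :=
  fun i j => fderiv ℝ (fun y => fderiv ℝ u y (Pi.single j 1)) x (Pi.single i 1)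

/-- Expansion of a continuous linear map on `ℝⁿ` in the standard basis. -/
lemma clm_sum {n : ℕ} {F : Type*} [NormedAddCommGroup F] [NormedSpace ℝ F]
    (L : (Fin n → ℝ) →L[ℝ] F) (v : Fin n → ℝ) :
    L v = ∑ i, v i • L (Pi.single i 1) := by
  have hv : v = ∑ i, v i • (Pi.single i 1 : Fin n → ℝ) := by
    funext j
    simp [Pi.single_apply, Finset.sum_apply, mul_comm]
  conv_lhs => rw [hv]
  simp

/-- Legendre duality for the steady Kähler–Ricci soliton Monge–Ampère equation: if `u` is `C²`
on the open set `U` with positive definite Hessian, its gradient maps `U` bijectively onto the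
open set `V` with `C¹` inverse `G`, `φ(y) = ⟨G y, y⟩ − u (G y)` is the Legendre transform, and
`⟨b, x⟩ = ⟨c, ∇u(x)⟩ + log det Hess u(x) + κ` on `U`, then
`⟨c, y⟩ = ⟨b, ∇φ(y)⟩ + log det Hess φ(y) − κ` on `V`. -/
theorem stmt11 {n : ℕ} (U V : Set (Fin n → ℝ)) (hU : IsOpen U) (hV : IsOpen V)
    (u : (Fin n → ℝ) → ℝ) (hu : ContDiffOn ℝ 2 u U)
    (hpos : ∀ x ∈ U, (hess u x).PosDef)
    (G : (Fin n → ℝ) → (Fin n → ℝ)) (hG : ContDiffOn ℝ 1 G V)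
    (hmaps : ∀ x ∈ U, grad u x ∈ V)
    (hGU : ∀ y ∈ V, G y ∈ U)
    (hleft : ∀ x ∈ U, G (grad u x) = x)
    (hright : ∀ y ∈ V, grad u (G y) = y)
    (φ : (Fin n → ℝ) → ℝ) (hφ : ∀ y ∈ V, φ y = G y ⬝ᵥ y - u (G y))
    (b c : Fin n → ℝ) (κ : ℝ)
    (hMA : ∀ x ∈ U, b ⬝ᵥ x = c ⬝ᵥ grad u x + Real.log (hess u x).det + κ) :
    ∀ y ∈ V, c ⬝ᵥ y = b ⬝ᵥ grad φ y + Real.log (hess φ y).det - κ := by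
  classical
  -- `grad u` is C¹ on `U`
  have hu1 : ContDiffOn ℝ 1 (fun z => fderiv ℝ u z) U :=
    hu.fderiv_of_isOpen hU (by norm_num)
  have hgradC : ContDiffOn ℝ 1 (grad u) U := by
    have heq : grad u = fun z =>
        (ContinuousLinearMap.pi fun i : Fin n =>
          ContinuousLinearMap.apply ℝ ℝ ((Pi.single i 1 : Fin n → ℝ))) (fderiv ℝ u z) := rfl
    rw [heq]
    exact (ContinuousLinearMap.pi fun i : Fin n =>
      ContinuousLinearMap.apply ℝ ℝ ((Pi.single i 1 : Fin n → ℝ))).contDiff.comp_contDiffOn hu1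
  -- differentiability of u at points of U
  have hudiff : ∀ x ∈ U, HasFDerivAt u (fderiv ℝ u x) x := by
    intro x hx
    exact ((hu.differentiableOn (by norm_num)).differentiableAt (hU.mem_nhds hx)).hasFDerivAt
  have hGdiff : ∀ z ∈ V, HasFDerivAt G (fderiv ℝ G z) z := by
    intro z hz
    exact ((hG.differentiableOn one_ne_zero).differentiableAt (hV.mem_nhds hz)).hasFDerivAt
  -- fderiv u x applied to a vector
  have hfu : ∀ x ∈ U, ∀ w, fderiv ℝ u x w = w ⬝ᵥ grad u x := by
    intro x hx w
    rw [clm_sum (fderiv ℝ u x) w]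
    simp [dotProduct, grad, smul_eq_mul]
  -- derivative of φ everywhere on V
  have key : ∀ z ∈ V, HasFDerivAt φ
      (∑ i, G z i • ContinuousLinearMap.proj (R := ℝ) (φ := fun _ : Fin n => ℝ) i) z := by
    intro z hz
    have hxU : G z ∈ U := hGU z hz
    have hGz := hGdiff z hz
    have hux : HasFDerivAt u (fderiv ℝ u (G z)) (G z) := hudiff _ hxU
    set DG := fderiv ℝ G z with hDGdef
    -- each coordinate of G is differentiable
    have hcomp : ∀ i, HasFDerivAt (fun w => G w i)
        ((ContinuousLinearMap.proj (R := ℝ) (φ := fun _ : Fin n => ℝ) i).comp DG) z :=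
      fun i => hasFDerivAt_pi'.1 hGz i
    have h1 : ∀ i : Fin n, HasFDerivAt (fun w : Fin n → ℝ => G w i * w i)
        (G z i • ContinuousLinearMap.proj (R := ℝ) (φ := fun _ : Fin n => ℝ) i
          + z i • ((ContinuousLinearMap.proj (R := ℝ) (φ := fun _ : Fin n => ℝ) i).comp DG)) z := by
      intro i
      have hwi : HasFDerivAt (fun w : Fin n → ℝ => w i)
          (ContinuousLinearMap.proj (R := ℝ) (φ := fun _ : Fin n => ℝ) i) z :=
        (ContinuousLinearMap.proj (R := ℝ) (φ := fun _ : Fin n => ℝ) i).hasFDerivAt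
      exact (hcomp i).mul hwi
    have hsum : HasFDerivAt (fun w : Fin n → ℝ => ∑ i, G w i * w i)
        (∑ i, (G z i • ContinuousLinearMap.proj (R := ℝ) (φ := fun _ : Fin n => ℝ) i
          + z i • ((ContinuousLinearMap.proj (R := ℝ) (φ := fun _ : Fin n => ℝ) i).comp DG))) z :=
      HasFDerivAt.fun_sum fun i _ => h1 i
    have h2 : HasFDerivAt (fun w => u (G w)) ((fderiv ℝ u (G z)).comp DG) z :=
      hux.comp z hGz
    have h3 : HasFDerivAt (fun w : Fin n → ℝ => (∑ i, G w i * w i) - u (G w))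
        ((∑ i, (G z i • ContinuousLinearMap.proj (R := ℝ) (φ := fun _ : Fin n => ℝ) i
          + z i • ((ContinuousLinearMap.proj (R := ℝ) (φ := fun _ : Fin n => ℝ) i).comp DG)))
          - (fderiv ℝ u (G z)).comp DG) z := hsum.sub h2
    have hev : φ =ᶠ[nhds z] fun w : Fin n → ℝ => (∑ i, G w i * w i) - u (G w) := by
      filter_upwards [hV.mem_nhds hz] with w hw
      rw [hφ w hw]
      rfl
    have h4 := h3.congr_of_eventuallyEq hev
    convert h4 using 1
    ext w
    simp only [ContinuousLinearMap.coe_sum', Finset.sum_apply, ContinuousLinearMap.add_apply,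
      ContinuousLinearMap.smul_apply, ContinuousLinearMap.proj_apply,
      ContinuousLinearMap.coe_comp', Function.comp_apply, ContinuousLinearMap.sub_apply,
      smul_eq_mul]
    have hDu : fderiv ℝ u (G z) (DG w) = ∑ i, DG w i * z i := by
      rw [hfu (G z) hxU (DG w)]
      rw [hright z hz]
      rfl
    rw [hDu, Finset.sum_add_distrib]
    have hcm : ∑ x : Fin n, z x * DG w x = ∑ i : Fin n, DG w i * z i :=
      Finset.sum_congr rfl fun i _ => mul_comm _ _
    rw [hcm]
    ring
  -- grad φ = G on V
  have hgradφ : ∀ z ∈ V, grad φ z = G z := by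
    intro z hz
    funext i
    have := (key z hz).fderiv
    simp only [grad, this]
    simp [Pi.single_apply, Finset.sum_apply]
  intro y hy
  have hxU : G y ∈ U := hGU y hy
  set DG := fderiv ℝ G y with hDGdef
  have hGy := hGdiff y hy
  -- grad u differentiable at G y
  have hDF : HasFDerivAt (grad u) (fderiv ℝ (grad u) (G y)) (G y) :=
    ((hgradC.differentiableOn one_ne_zero).differentiableAt (hU.mem_nhds hxU)).hasFDerivAt
  set DF := fderiv ℝ (grad u) (G y) with hDFdef
  -- hess u (G y) entries
  have hAentry : ∀ i j, hess u (G y) i j = DF (Pi.single i 1) j := by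
    intro i j
    have hcomp : HasFDerivAt (fun z => grad u z j)
        ((ContinuousLinearMap.proj (R := ℝ) (φ := fun _ : Fin n => ℝ) j).comp DF) (G y) :=
      hasFDerivAt_pi'.1 hDF j
    have : hess u (G y) i j
        = fderiv ℝ (fun z => grad u z j) (G y) (Pi.single i 1) := rfl
    rw [this, hcomp.fderiv]
    rfl
  -- hess φ y entries
  have hBentry : ∀ i j, hess φ y i j = DG (Pi.single i 1) j := by
    intro i j
    have hev : (fun z => fderiv ℝ φ z (Pi.single j 1)) =ᶠ[nhds y] fun z => G z j := by
      filter_upwards [hV.mem_nhds hy] with z hz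
      rw [(key z hz).fderiv]
      simp [Pi.single_apply, Finset.sum_apply]
    have hcomp : HasFDerivAt (fun z => G z j)
        ((ContinuousLinearMap.proj (R := ℝ) (φ := fun _ : Fin n => ℝ) j).comp DG) y :=
      hasFDerivAt_pi'.1 hGy j
    have : hess φ y i j = fderiv ℝ (fun z => G z j) y (Pi.single i 1) := by
      unfold hess
      rw [hev.fderiv_eq]
    rw [this, hcomp.fderiv]
    rfl
  -- chain rule: DF ∘ DG = id
  have hchain : DF.comp DG = ContinuousLinearMap.id ℝ (Fin n → ℝ) := by
    have hcomp : HasFDerivAt (grad u ∘ G) (DF.comp DG) y := hDF.comp y hGy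
    have hev : grad u ∘ G =ᶠ[nhds y] id := by
      filter_upwards [hV.mem_nhds hy] with z hz
      exact hright z hz
    have hid : HasFDerivAt (grad u ∘ G) (ContinuousLinearMap.id ℝ (Fin n → ℝ)) y :=
      (hasFDerivAt_id y).congr_of_eventuallyEq hev
    exact hcomp.unique hid
  -- matrix identity
  have hBA : hess φ y * hess u (G y) = 1 := by
    ext i j
    have h1 : (hess φ y * hess u (G y)) i j
        = ∑ k, DG (Pi.single i 1) k * DF (Pi.single k 1) j := by
      simp [Matrix.mul_apply, hAentry, hBentry]
    have h2 : DF (DG (Pi.single i 1)) j = ∑ k, DG (Pi.single i 1) k * DF (Pi.single k 1) j := by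
      rw [clm_sum DF (DG (Pi.single i 1))]
      simp [Finset.sum_apply, smul_eq_mul]
    have h3 : DF (DG (Pi.single i 1)) = Pi.single i 1 := by
      have := congrFun (congrArg (fun (L : (Fin n → ℝ) →L[ℝ] (Fin n → ℝ)) => L (Pi.single i 1)) hchain)
      simpa using congrArg (fun L : (Fin n → ℝ) →L[ℝ] (Fin n → ℝ) => L (Pi.single i 1)) hchain
    rw [h1, ← h2, h3]
    simp [Pi.single_apply, Matrix.one_apply, eq_comm]
  have hdetA : 0 < (hess u (G y)).det := (hpos _ hxU).det_pos
  have hdet : (hess φ y).det = ((hess u (G y)).det)⁻¹ := by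
    have h := congrArg Matrix.det hBA
    rw [Matrix.det_mul, Matrix.det_one] at h
    field_simp
    linarith [h]
  have hMAx := hMA (G y) hxU
  rw [hright y hy] at hMAx
  rw [hgradφ y hy, hdet, Real.log_inv]
  linarith
end

section
/- Let V ⊆ ℝⁿ be open, let φ : V → ℝ be a C² function with Hess φ(y) positive definite for all y ∈ V, and suppose there are b, c ∈ ℝⁿ and κ ∈ ℝ such that ⟨c, y⟩ = ⟨b, ∇φ(y)⟩ + log det Hess φ(y) + κ for all y ∈ V. Let A be an invertible antisymmetric n×n real matrix, and define φ_A(x) = φ(Ax) on the open set A⁻¹(V) = {x : Ax ∈ V}. Then Hess φ_A(x) is positive definite for all x ∈ A⁻¹(V) (so φ_A is strictly convex on convex subsets), and ⟨−Ac, x⟩ = ⟨A⁻¹b, ∇φ_A(x)⟩ + log det Hess φ_A(x) + κ − log((det A)²) for all x ∈ A⁻¹(V); that is, φ_A satisfies the steady Kähler–Ricci soliton Monge–Ampère equation with soliton constants −Ac and A⁻¹b. -/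
open Matrix

lemma lin_expand {n : ℕ} {M : Type*} [AddCommMonoid M] [Module ℝ M]
    (T : (Fin n → ℝ) →ₗ[ℝ] M) (v : Fin n → ℝ) :
    T v = ∑ k, v k • T (Pi.single k 1) := by
  conv_lhs => rw [← Finset.univ_sum_single v]
  rw [map_sum]
  refine Finset.sum_congr rfl fun k _ => ?_
  have : (Pi.single k (v k) : Fin n → ℝ) = v k • (Pi.single k 1 : Fin n → ℝ) := by
    ext j; by_cases h : j = k <;> simp [Pi.single_apply, h]
  rw [this, _root_.map_smul]

lemma clm_eval {n : ℕ} (T : (Fin n → ℝ) →L[ℝ] ℝ) (v : Fin n → ℝ) :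
    T v = ∑ k, v k * T (Pi.single k 1) := by
  simpa [smul_eq_mul] using lin_expand (T.toLinearMap) v

lemma clm2_eval {n : ℕ} (T : (Fin n → ℝ) →L[ℝ] ((Fin n → ℝ) →L[ℝ] ℝ)) (v w : Fin n → ℝ) :
    T v w = ∑ k, ∑ l, v k * w l * T (Pi.single k 1) (Pi.single l 1) := by
  have h1 : T v = ∑ k, v k • T (Pi.single k 1) := lin_expand T.toLinearMap v
  rw [h1, ContinuousLinearMap.sum_apply]
  refine Finset.sum_congr rfl fun k _ => ?_
  rw [ContinuousLinearMap.smul_apply, smul_eq_mul, clm_eval (T (Pi.single k 1)) w,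
    Finset.mul_sum]
  refine Finset.sum_congr rfl fun l _ => ?_
  ring


/-- If `φ` is `C²` with positive definite Hessian on the open set `V` and satisfies the steady
Kähler–Ricci soliton Monge–Ampère equation
`⟨c, y⟩ = ⟨b, ∇φ(y)⟩ + log det Hess φ(y) + κ` on `V`, and `A` is an invertible antisymmetric
matrix, then `φ_A(x) := φ(Ax)`, defined on `{x | Ax ∈ V}`, has positive definite Hessian and
satisfies
`⟨−Ac, x⟩ = ⟨A⁻¹b, ∇φ_A(x)⟩ + log det Hess φ_A(x) + κ − log((det A)²)` there, i.e. it is a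
soliton potential with constants `−Ac` and `A⁻¹b`. -/
theorem stmt12 {n : ℕ} (V : Set (Fin n → ℝ)) (hV : IsOpen V)
    (φ : (Fin n → ℝ) → ℝ) (hφ : ContDiffOn ℝ 2 φ V)
    (hpos : ∀ y ∈ V, (hess φ y).PosDef)
    (b c : Fin n → ℝ) (κ : ℝ)
    (hMA : ∀ y ∈ V, c ⬝ᵥ y = b ⬝ᵥ grad φ y + Real.log (hess φ y).det + κ)
    (A : Matrix (Fin n) (Fin n) ℝ) (hA : Aᵀ = -A) (hAu : IsUnit A)
    (φA : (Fin n → ℝ) → ℝ) (hφA : ∀ x, φA x = φ (A.mulVec x)) :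
    ∀ x, A.mulVec x ∈ V →
      (hess φA x).PosDef ∧
      (-(A.mulVec c)) ⬝ᵥ x =
        (A⁻¹.mulVec b) ⬝ᵥ grad φA x + Real.log (hess φA x).det + κ
          - Real.log (A.det ^ 2) := by
  intro x hx
  set y := A.mulVec x with hy
  -- the continuous linear map given by A
  set L : (Fin n → ℝ) →L[ℝ] (Fin n → ℝ) :=
    LinearMap.toContinuousLinearMap (Matrix.mulVecLin A) with hLdef
  have hL : ∀ z, L z = A.mulVec z := fun z => by
    simp [hLdef, Matrix.mulVecLin_apply]
  have hdetA : IsUnit A.det := (Matrix.isUnit_iff_isUnit_det A).mp hAu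
  have hdetA0 : A.det ≠ 0 := hdetA.ne_zero
  have hAinv : A * A⁻¹ = 1 := Matrix.mul_nonsing_inv A hdetA
  have hAinv' : A⁻¹ * A = 1 := Matrix.nonsing_inv_mul A hdetA
  -- differentiability
  have hc2 : ∀ z ∈ V, ContDiffAt ℝ 2 φ z := fun z hz => hφ.contDiffAt (hV.mem_nhds hz)
  have hd1 : ∀ z ∈ V, DifferentiableAt ℝ φ z := fun z hz =>
    (hc2 z hz).differentiableAt (by norm_num)
  have hd2 : ∀ z ∈ V, DifferentiableAt ℝ (fderiv ℝ φ) z := fun z hz =>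
    ((hc2 z hz).fderiv_right (m := 1) (by norm_num)).differentiableAt (by norm_num)
  have hφAL : φA = fun w => φ (L w) := funext fun w => by rw [hφA, hL]
  -- first derivative of φA
  have hfd : ∀ z, A.mulVec z ∈ V → fderiv ℝ φA z = (fderiv ℝ φ (A.mulVec z)).comp L := by
    intro z hz
    have h1 : HasFDerivAt φ (fderiv ℝ φ (A.mulVec z)) (L z) := by
      rw [hL]; exact (hd1 _ hz).hasFDerivAt
    have := h1.comp z L.hasFDerivAt
    rw [hφAL]
    exact this.fderiv
  -- gradient formula
  have hgrad : grad φA x = Aᵀ.mulVec (grad φ y) := by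
    funext i
    have : grad φA x i = fderiv ℝ φ y (A.mulVec (Pi.single i 1)) := by
      simp only [grad, hfd x hx, ContinuousLinearMap.comp_apply, hL]
      rfl
    rw [this, clm_eval]
    simp only [Matrix.mulVec_single_one, Matrix.col_apply]
    rw [Matrix.mulVec]
    simp only [Matrix.transpose_apply, dotProduct, grad]

  -- second derivative
  set H' : (Fin n → ℝ) →L[ℝ] ((Fin n → ℝ) →L[ℝ] ℝ) := fderiv ℝ (fderiv ℝ φ) y with hH'
  -- hess φ y in terms of H'
  have hHphi : ∀ k l, hess φ y k l = H' (Pi.single k 1) (Pi.single l 1) := by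
    intro k l
    have h0 : HasFDerivAt (⇑(ContinuousLinearMap.apply ℝ ℝ (Pi.single l 1 : Fin n → ℝ)) ∘ (fderiv ℝ φ))
        ((ContinuousLinearMap.apply ℝ ℝ (Pi.single l 1 : Fin n → ℝ)).comp H') y :=
      (ContinuousLinearMap.apply ℝ ℝ (Pi.single l 1 : Fin n → ℝ)).hasFDerivAt.comp y (hd2 y hx).hasFDerivAt
    have h1 : HasFDerivAt (fun z => fderiv ℝ φ z (Pi.single l 1))
        ((ContinuousLinearMap.apply ℝ ℝ (Pi.single l 1 : Fin n → ℝ)).comp H') y := h0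
    simp only [hess, h1.fderiv, ContinuousLinearMap.comp_apply,
      ContinuousLinearMap.apply_apply]
  -- hess φA in terms of H'
  have hHA : ∀ i j, hess φA x i j
      = H' (A.mulVec (Pi.single i 1)) (A.mulVec (Pi.single j 1)) := by
    intro i j
    have heve : (fun z => fderiv ℝ φA z (Pi.single j 1))
        =ᶠ[nhds x] (fun z => fderiv ℝ φ (L z) (A.mulVec (Pi.single j 1))) := by
      have hopen : IsOpen {z | A.mulVec z ∈ V} := by
        have : {z | A.mulVec z ∈ V} = L ⁻¹' V := by
          ext z; simp [hL]
        rw [this]; exact hV.preimage L.continuous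
      filter_upwards [hopen.mem_nhds hx] with z hz
      rw [hfd z hz]
      simp [ContinuousLinearMap.comp_apply, hL]
    have h0 : HasFDerivAt (⇑(ContinuousLinearMap.apply ℝ ℝ (A.mulVec (Pi.single j 1))) ∘ (fderiv ℝ φ))
        ((ContinuousLinearMap.apply ℝ ℝ (A.mulVec (Pi.single j 1))).comp H') y :=
      (ContinuousLinearMap.apply ℝ ℝ (A.mulVec (Pi.single j 1))).hasFDerivAt.comp y (hd2 y hx).hasFDerivAt
    have h1 : HasFDerivAt (fun z => fderiv ℝ φ z (A.mulVec (Pi.single j 1)))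
        ((ContinuousLinearMap.apply ℝ ℝ (A.mulVec (Pi.single j 1))).comp H') y := h0
    have hLx : L x = y := by rw [hL]
    have h2' : HasFDerivAt ((fun z => fderiv ℝ φ z (A.mulVec (Pi.single j 1))) ∘ ⇑L)
        (((ContinuousLinearMap.apply ℝ ℝ (A.mulVec (Pi.single j 1))).comp H').comp L) x := by
      refine HasFDerivAt.comp x ?_ L.hasFDerivAt
      rw [hLx]; exact h1
    have h2 : HasFDerivAt (fun z => fderiv ℝ φ (L z) (A.mulVec (Pi.single j 1)))
        (((ContinuousLinearMap.apply ℝ ℝ (A.mulVec (Pi.single j 1))).comp H').comp L) x := h2'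

    have heq2 : fderiv ℝ (fun z => fderiv ℝ φA z (Pi.single j 1)) x
        = fderiv ℝ (fun z => fderiv ℝ φ (L z) (A.mulVec (Pi.single j 1))) x :=
      heve.fderiv_eq
    show fderiv ℝ (fun z => fderiv ℝ φA z (Pi.single j 1)) x (Pi.single i 1) = _
    rw [heq2, h2.fderiv]
    simp only [ContinuousLinearMap.comp_apply, ContinuousLinearMap.apply_apply, hL]
  -- hessian formula
  have hhess : hess φA x = Aᵀ * hess φ y * A := by
    funext i j
    rw [hHA i j, clm2_eval]
    simp only [Matrix.mulVec_single_one, Matrix.col_apply, ← hHphi]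
    simp only [Matrix.mul_apply, Matrix.transpose_apply, Finset.sum_mul]
    rw [Finset.sum_comm]
    refine Finset.sum_congr rfl fun k _ => Finset.sum_congr rfl fun l _ => ?_
    ring
  have hHpos := hpos y hx
  -- positive definiteness
  have hposA : (hess φA x).PosDef := by
    rw [hhess]
    refine Matrix.PosDef.of_dotProduct_mulVec_pos ?_ ?_
    · have h1 : (hess φ y)ᵀ = hess φ y := hHpos.1
      show (Aᵀ * hess φ y * A)ᴴ = _
      calc (Aᵀ * hess φ y * A)ᴴ = (Aᵀ * hess φ y * A)ᵀ := rfl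
        _ = Aᵀ * (hess φ y)ᵀ * (Aᵀ)ᵀ := by
            rw [Matrix.transpose_mul, Matrix.transpose_mul, Matrix.mul_assoc]
        _ = Aᵀ * hess φ y * A := by rw [h1, Matrix.transpose_transpose]
    · intro v hv
      have hAv : A.mulVec v ≠ 0 := by
        intro h
        apply hv
        have : A⁻¹.mulVec (A.mulVec v) = v := by
          rw [Matrix.mulVec_mulVec, hAinv', Matrix.one_mulVec]
        rw [← this, h, Matrix.mulVec_zero]
      have hkey : v ⬝ᵥ ((Aᵀ * hess φ y * A).mulVec v)
          = (A.mulVec v) ⬝ᵥ (hess φ y).mulVec (A.mulVec v) := by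
        rw [← Matrix.mulVec_mulVec, ← Matrix.mulVec_mulVec, Matrix.dotProduct_mulVec,
          Matrix.vecMul_transpose]
      have h2 := hHpos.dotProduct_mulVec_pos hAv
      rw [star_trivial] at h2
      show (0:ℝ) < star v ⬝ᵥ ((Aᵀ * hess φ y * A).mulVec v)
      rw [star_trivial, hkey]
      exact h2
  refine ⟨hposA, ?_⟩
  -- determinant
  have hdet : (hess φA x).det = A.det ^ 2 * (hess φ y).det := by
    rw [hhess, Matrix.det_mul, Matrix.det_mul, Matrix.det_transpose]
    ring
  have hdHpos : 0 < (hess φ y).det := hHpos.det_pos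
  have hlog : Real.log (hess φA x).det
      = Real.log (A.det ^ 2) + Real.log (hess φ y).det := by
    rw [hdet, Real.log_mul (by positivity) (ne_of_gt hdHpos)]
  -- dot products
  have hdot1 : (-(A.mulVec c)) ⬝ᵥ x = c ⬝ᵥ y := by
    have hAx : Aᵀ.mulVec x = -y := by rw [hA, Matrix.neg_mulVec, hy]
    calc (-(A.mulVec c)) ⬝ᵥ x = -((A.mulVec c) ⬝ᵥ x) := by rw [neg_dotProduct]
      _ = -(x ⬝ᵥ (A.mulVec c)) := by rw [dotProduct_comm]
      _ = -((x ᵥ* A) ⬝ᵥ c) := by rw [Matrix.dotProduct_mulVec]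
      _ = -((Aᵀ.mulVec x) ⬝ᵥ c) := by rw [Matrix.mulVec_transpose]
      _ = -((-y) ⬝ᵥ c) := by rw [hAx]
      _ = c ⬝ᵥ y := by rw [neg_dotProduct, neg_neg, dotProduct_comm]
  have hdot2 : (A⁻¹.mulVec b) ⬝ᵥ grad φA x = b ⬝ᵥ grad φ y := by
    rw [hgrad, Matrix.dotProduct_mulVec, Matrix.vecMul_transpose, Matrix.mulVec_mulVec,
      hAinv, Matrix.one_mulVec]
  rw [hdot1, hdot2, hlog, hMA y hx]
  ring
end

section
/- Let V ⊆ ℝⁿ be open, let φ : V → ℝ be a C² function with Hess φ(y) positive definite for all y ∈ V, and suppose there are b, c ∈ ℝⁿ and κ ∈ ℝ such that ⟨c, y⟩ = ⟨b, ∇φ(y)⟩ + log det Hess φ(y) + κ for all y ∈ V. Then the function y ↦ log det Hess φ(y) has a directional derivative in the direction b at every y ∈ V, equal to ⟨b, c⟩ − ⟨Hess φ(y) b, b⟩. -/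
open Matrix

/-- If `φ` is `C²` with positive definite Hessian on the open set `V` and satisfies the steady
Kähler–Ricci soliton Monge–Ampère equation
`⟨c, y⟩ = ⟨b, ∇φ(y)⟩ + log det Hess φ(y) + κ` on `V`, then `y ↦ log det Hess φ(y)` has
directional derivative `⟨b, c⟩ − ⟨Hess φ(y) b, b⟩` in the direction `b` at every `y ∈ V`. -/
theorem stmt13 {n : ℕ} (V : Set (Fin n → ℝ)) (hV : IsOpen V)
    (φ : (Fin n → ℝ) → ℝ) (hφ : ContDiffOn ℝ 2 φ V)
    (hpos : ∀ y ∈ V, (hess φ y).PosDef)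
    (b c : Fin n → ℝ) (κ : ℝ)
    (hMA : ∀ y ∈ V, c ⬝ᵥ y = b ⬝ᵥ grad φ y + Real.log (hess φ y).det + κ) :
    ∀ y ∈ V, HasLineDerivAt ℝ (fun z => Real.log (hess φ z).det)
      (b ⬝ᵥ c - (hess φ y).mulVec b ⬝ᵥ b) y b := by
  intro y hy
  set F := fderiv ℝ φ with hFdef
  have hF1 : ContDiffOn ℝ 1 F V := hφ.fderiv_of_isOpen hV (by norm_num)
  have hFd : DifferentiableAt ℝ F y :=
    (hF1.differentiableOn one_ne_zero).differentiableAt (hV.mem_nhds hy)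
  set D := fderiv ℝ F y with hDdef
  have hb : b = ∑ j, b j • (Pi.single j 1 : Fin n → ℝ) := by
    ext k
    simp [Pi.single_apply]
  -- hess entries in terms of D
  have hhess : ∀ i j, hess φ y i j = D (Pi.single i 1) (Pi.single j 1) := by
    intro i j
    show fderiv ℝ (fun z => F z (Pi.single j 1)) y (Pi.single i 1) = _
    rw [fderiv_clm_apply hFd (differentiableAt_const _)]
    simp
    rfl
  -- eventual equality
  have heq : (fun t : ℝ => Real.log (hess φ (y + t • b)).det)
      =ᶠ[nhds (0:ℝ)] fun t => c ⬝ᵥ (y + t • b) - b ⬝ᵥ grad φ (y + t • b) - κ := by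
    have hcont : Continuous (fun t : ℝ => y + t • b) :=
      continuous_const.add (continuous_id.smul continuous_const)
    have hmem : ∀ᶠ t : ℝ in nhds 0, (y + t • b) ∈ V := by
      have h0 : y + (0:ℝ) • b = y := by simp
      have := hcont.continuousAt (x := (0:ℝ))
      rw [ContinuousAt, h0] at this
      exact this (hV.mem_nhds hy)
    filter_upwards [hmem] with t ht
    have := hMA _ ht
    linarith
  rw [HasLineDerivAt]
  refine HasDerivAt.congr_of_eventuallyEq ?_ heq
  -- derivative of the RHS
  have hline : HasDerivAt (fun t : ℝ => y + t • b) b 0 := by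
    simpa using ((hasDerivAt_id (0:ℝ)).smul_const b).const_add y
  have hF0 : HasFDerivAt F D y := hFd.hasFDerivAt
  have hcomp : HasDerivAt (fun t : ℝ => F (y + t • b)) (D b) 0 := by
    have hF0' : HasFDerivAt F D (y + (0:ℝ) • b) := by simpa using hF0
    exact hF0'.comp_hasDerivAt (0:ℝ) hline
  -- expansion of a CLM applied to b
  have hDapp : ∀ (L : (Fin n → ℝ) →L[ℝ] ℝ), L b = ∑ i, b i * L (Pi.single i 1) := by
    intro L
    conv_lhs => rw [hb]
    rw [map_sum]
    exact Finset.sum_congr rfl fun i _ => by rw [ContinuousLinearMap.map_smul, smul_eq_mul]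
  have hDbb : D b b = (hess φ y).mulVec b ⬝ᵥ b := by
    calc D b b = ∑ i, b i * D b (Pi.single i 1) := hDapp (D b)
      _ = ∑ i, b i * ∑ j, b j * D (Pi.single j 1) (Pi.single i 1) := by
          refine Finset.sum_congr rfl fun i _ => ?_
          congr 1
          have := hDapp (D.flip (Pi.single i 1))
          simpa [ContinuousLinearMap.flip_apply] using this
      _ = (hess φ y).mulVec b ⬝ᵥ b := by
          simp only [mulVec, dotProduct, hhess, Finset.mul_sum, Finset.sum_mul]
          rw [Finset.sum_comm]
          exact Finset.sum_congr rfl fun j _ => Finset.sum_congr rfl fun i _ => by ring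
  have hgrad : ∀ z, b ⬝ᵥ grad φ z = F z b := by
    intro z
    have := hDapp (F z)
    rw [this]
    simp [grad, dotProduct, hFdef]
  have hgb : HasDerivAt (fun t : ℝ => b ⬝ᵥ grad φ (y + t • b)) (D b b) 0 := by
    have h2 : HasDerivAt (fun t : ℝ => F (y + t • b) b) (D b b) 0 := by
      simpa using hcomp.clm_apply (hasDerivAt_const (0:ℝ) b)
    have hfe : (fun t : ℝ => b ⬝ᵥ grad φ (y + t • b)) = fun t : ℝ => F (y + t • b) b :=
      funext fun t => hgrad _
    rw [hfe]
    exact h2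
  have hc : HasDerivAt (fun t : ℝ => c ⬝ᵥ (y + t • b)) (c ⬝ᵥ b) 0 := by
    have hfe : (fun t : ℝ => c ⬝ᵥ (y + t • b)) = fun t : ℝ => c ⬝ᵥ y + (c ⬝ᵥ b) * t := by
      funext t
      simp [dotProduct_add, dotProduct_smul, smul_eq_mul]
      ring
    rw [hfe]
    simpa using (((hasDerivAt_id (0:ℝ)).const_mul (c ⬝ᵥ b)).const_add (c ⬝ᵥ y))
  have hfinal := (hc.sub hgb).sub_const κ
  have hval : b ⬝ᵥ c - (hess φ y).mulVec b ⬝ᵥ b = c ⬝ᵥ b - D b b := by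
    rw [dotProduct_comm, hDbb]
  rw [hval]
  exact hfinal
end

section
/- Let P ⊆ ℝⁿ be a nonempty open convex set and let u : P → ℝ be a C² function whose Hessian Hess u(x) is positive definite at every point x ∈ P. Suppose the gradient map ∇u : P → ℝⁿ is proper, i.e. the preimage under ∇u of every compact subset of ℝⁿ is a compact subset of P (equivalently, ‖∇u(x_k)‖ → ∞ along every sequence (x_k) in P that eventually leaves every compact subset of P). Then ∇u maps P bijectively onto ℝⁿ. -/
open Matrix

namespace Stmt14Aux

variable {n : ℕ}

/-- Evaluation of a continuous linear functional on the standard basis, as a CLM. -/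
noncomputable def evalCLM (n : ℕ) : ((Fin n → ℝ) →L[ℝ] ℝ) →L[ℝ] (Fin n → ℝ) :=
  ContinuousLinearMap.pi fun i => ContinuousLinearMap.apply ℝ ℝ (Pi.single i 1)

lemma eq_sum_single (v : Fin n → ℝ) : v = ∑ j, v j • (Pi.single j 1 : Fin n → ℝ) := by
  ext i
  simp [Finset.sum_apply, Pi.single_apply]

variable {P : Set (Fin n → ℝ)} {u : (Fin n → ℝ) → ℝ}

lemma hess_apply (hP : IsOpen P) (hu : ContDiffOn ℝ 2 u P) {x : Fin n → ℝ} (hx : x ∈ P)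
    (i j : Fin n) :
    hess u x i j = fderiv ℝ (fderiv ℝ u) x (Pi.single i 1) (Pi.single j 1) := by
  have hC1 : ContDiffOn ℝ 1 (fderiv ℝ u) P := hu.fderiv_of_isOpen hP (by norm_num)
  have hdiff : DifferentiableAt ℝ (fderiv ℝ u) x :=
    (hC1.differentiableOn one_ne_zero).differentiableAt (hP.mem_nhds hx)
  have h1 : HasFDerivAt (fun y => fderiv ℝ u y (Pi.single j 1))
      ((ContinuousLinearMap.apply ℝ ℝ (Pi.single j 1)).comp (fderiv ℝ (fderiv ℝ u) x)) x :=
    ((ContinuousLinearMap.apply ℝ ℝ (Pi.single j 1 : Fin n → ℝ)).hasFDerivAt.comp x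
      hdiff.hasFDerivAt : _)
  show fderiv ℝ (fun y => fderiv ℝ u y (Pi.single j 1)) x (Pi.single i 1) = _
  rw [h1.fderiv]
  rfl

lemma key (hP : IsOpen P) (hu : ContDiffOn ℝ 2 u P) {x : Fin n → ℝ} (hx : x ∈ P) :
    HasStrictFDerivAt (grad u) ((evalCLM n).comp (fderiv ℝ (fderiv ℝ u) x)) x ∧
    ∀ v : Fin n → ℝ, ((evalCLM n).comp (fderiv ℝ (fderiv ℝ u) x)) v = (hess u x)ᵀ *ᵥ v := by
  have hC1 : ContDiffOn ℝ 1 (fderiv ℝ u) P := hu.fderiv_of_isOpen hP (by norm_num)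
  have hdiff : DifferentiableAt ℝ (fderiv ℝ u) x :=
    (hC1.differentiableOn one_ne_zero).differentiableAt (hP.mem_nhds hx)
  have hgrad : HasFDerivAt (grad u) ((evalCLM n).comp (fderiv ℝ (fderiv ℝ u) x)) x :=
    (evalCLM n).hasFDerivAt.comp x hdiff.hasFDerivAt
  have hCA : ContDiffAt ℝ 1 (grad u) x :=
    (((evalCLM n).contDiff.comp_contDiffOn hC1)).contDiffAt (hP.mem_nhds hx)
  constructor
  · exact hCA.hasStrictFDerivAt' hgrad one_ne_zero
  · intro v
    ext i
    have hv : v = ∑ j, v j • (Pi.single j 1 : Fin n → ℝ) := eq_sum_single v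
    calc ((evalCLM n).comp (fderiv ℝ (fderiv ℝ u) x)) v i
        = fderiv ℝ (fderiv ℝ u) x v (Pi.single i 1) := rfl
      _ = ∑ j, v j * fderiv ℝ (fderiv ℝ u) x (Pi.single j 1) (Pi.single i 1) := by
          conv_lhs => rw [hv]
          simp [ContinuousLinearMap.sum_apply]
      _ = ∑ j, v j * hess u x j i := by
          simp_rw [hess_apply hP hu hx]
      _ = ((hess u x)ᵀ *ᵥ v) i := by
          simp [Matrix.mulVec, dotProduct, Matrix.transpose_apply, mul_comm]

lemma dot_pos {x : Fin n → ℝ} (hpd : (hess u x).PosDef) {v : Fin n → ℝ} (hv : v ≠ 0) :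
    0 < v ⬝ᵥ ((hess u x)ᵀ *ᵥ v) := by
  have h := hpd.dotProduct_mulVec_pos hv
  have : v ⬝ᵥ ((hess u x)ᵀ *ᵥ v) = v ⬝ᵥ (hess u x *ᵥ v) := by
    rw [Matrix.dotProduct_mulVec, Matrix.vecMul_transpose, dotProduct_comm]
  rw [this]
  simpa using h

end Stmt14Aux

open Stmt14Aux in
/-- If `u` is `C²` with positive definite Hessian on a nonempty open convex set `P ⊆ ℝⁿ`, and
the gradient map `∇u` is proper as a map `P → ℝⁿ` (the preimage in `P` of every compact set is
compact), then `∇u` maps `P` bijectively onto `ℝⁿ`. -/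
theorem stmt14 {n : ℕ} (P : Set (Fin n → ℝ)) (hne : P.Nonempty) (hP : IsOpen P)
    (hconv : Convex ℝ P)
    (u : (Fin n → ℝ) → ℝ) (hu : ContDiffOn ℝ 2 u P)
    (hpos : ∀ x ∈ P, (hess u x).PosDef)
    (hproper : ∀ K : Set (Fin n → ℝ), IsCompact K → IsCompact {x ∈ P | grad u x ∈ K}) :
    Set.BijOn (grad u) P Set.univ := by
  -- continuity of grad on P
  have hC1 : ContDiffOn ℝ 1 (fderiv ℝ u) P := hu.fderiv_of_isOpen hP (by norm_num)
  have hcont : ContinuousOn (grad u) P :=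
    ((evalCLM n).contDiff.comp_contDiffOn hC1).continuousOn
  -- Injectivity
  have hinj : Set.InjOn (grad u) P := by
    intro a ha b hb hab
    by_contra hne'
    set d := b - a with hd
    have hdne : d ≠ 0 := sub_ne_zero.mpr (Ne.symm hne')
    set c : (Fin n → ℝ) →L[ℝ] ℝ := ∑ i, d i • (ContinuousLinearMap.proj i) with hc
    have hcdef : ∀ v, c v = d ⬝ᵥ v := by
      intro v
      simp [hc, dotProduct, ContinuousLinearMap.sum_apply]
    set φ : ℝ → ℝ := fun t => c (grad u (a + t • d)) with hφ
    have hmem : ∀ t ∈ Set.Icc (0:ℝ) 1, a + t • d ∈ P := fun t ht =>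
      hconv.add_smul_sub_mem ha hb ht
    have hderiv : ∀ t ∈ Set.Icc (0:ℝ) 1,
        HasDerivAt φ (d ⬝ᵥ ((hess u (a + t • d))ᵀ *ᵥ d)) t := by
      intro t ht
      have hxP := hmem t ht
      obtain ⟨hs, hform⟩ := key hP hu hxP
      have hline : HasDerivAt (fun t : ℝ => a + t • d) d t := by
        simpa using ((hasDerivAt_id t).smul_const d).const_add a
      have hcomp : HasDerivAt (fun t => grad u (a + t • d))
          (((evalCLM n).comp (fderiv ℝ (fderiv ℝ u) (a + t • d))) d) t :=
        HasFDerivAt.comp_hasDerivAt (l := grad u) t hs.hasFDerivAt hline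
      have hdot : HasDerivAt φ (c (((evalCLM n).comp (fderiv ℝ (fderiv ℝ u) (a + t • d))) d)) t :=
        c.hasFDerivAt.comp_hasDerivAt t hcomp
      rw [hform d, hcdef] at hdot
      exact hdot
    have hmono : StrictMonoOn φ (Set.Icc (0:ℝ) 1) := by
      apply strictMonoOn_of_deriv_pos (convex_Icc 0 1)
      · exact fun t ht => (hderiv t ht).continuousAt.continuousWithinAt
      · intro t ht
        rw [interior_Icc] at ht
        have ht' : t ∈ Set.Icc (0:ℝ) 1 := Set.Ioo_subset_Icc_self ht
        rw [(hderiv t ht').deriv]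
        exact dot_pos (hpos _ (hmem t ht')) hdne
    have h01 : φ 0 < φ 1 := hmono (Set.left_mem_Icc.mpr zero_le_one)
      (Set.right_mem_Icc.mpr zero_le_one) zero_lt_one
    have h0 : φ 0 = c (grad u a) := by simp [hφ]
    have h1 : φ 1 = c (grad u b) := by simp [hφ, hd]
    rw [h0, h1, hab] at h01
    exact lt_irrefl _ h01
  -- Image is open
  have hopen : IsOpen (grad u '' P) := by
    rw [isOpen_iff_mem_nhds]
    rintro y ⟨x, hx, rfl⟩
    obtain ⟨hs, hform⟩ := key hP hu hx
    set D := (evalCLM n).comp (fderiv ℝ (fderiv ℝ u) x) with hD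
    have hDinj : Function.Injective D := by
      intro v w hvw
      have h0 : D (v - w) = 0 := by rw [map_sub, hvw, sub_self]
      by_contra hne'
      have hvw0 : v - w ≠ 0 := sub_ne_zero.mpr hne'
      have := dot_pos (hpos x hx) hvw0
      rw [← hform (v - w), h0] at this
      simp at this
    set E := (LinearEquiv.ofInjectiveEndo (D : (Fin n → ℝ) →ₗ[ℝ] (Fin n → ℝ))
      hDinj).toContinuousLinearEquiv with hE
    have hsE : HasStrictFDerivAt (grad u) (E : (Fin n → ℝ) →L[ℝ] (Fin n → ℝ)) x := by
      have : (E : (Fin n → ℝ) →L[ℝ] (Fin n → ℝ)) = D := by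
        ext v
        rfl
      rw [this]
      exact hs
    have hmap := hsE.map_nhds_eq_of_equiv
    rw [← hmap]
    exact Filter.image_mem_map (hP.mem_nhds hx)
  -- Image is closed
  have hclosed : IsClosed (grad u '' P) := by
    rw [← closure_subset_iff_isClosed]
    intro y hy
    set K := Metric.closedBall y 1 with hK
    have hCc : IsCompact {x ∈ P | grad u x ∈ K} := hproper K (isCompact_closedBall y 1)
    have himg : IsCompact (grad u '' {x ∈ P | grad u x ∈ K}) :=
      hCc.image_of_continuousOn (hcont.mono (fun x hx => hx.1))
    have h2 : y ∈ closure (grad u '' {x ∈ P | grad u x ∈ K}) := by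
      rw [mem_closure_iff_nhds] at hy ⊢
      intro t ht
      obtain ⟨z, ⟨hzt, hzb⟩, x, hxP, rfl⟩ :=
        hy (t ∩ Metric.ball y 1) (Filter.inter_mem ht (Metric.ball_mem_nhds y one_pos))
      exact ⟨grad u x, hzt, x, ⟨hxP, Metric.ball_subset_closedBall hzb⟩, rfl⟩
    rw [himg.isClosed.closure_eq] at h2
    exact Set.image_mono (fun x hx => hx.1) h2
  -- Image is everything
  have himg_ne : (grad u '' P).Nonempty := hne.image _
  have huniv : grad u '' P = Set.univ := by
    rcases isClopen_iff.mp ⟨hclosed, hopen⟩ with h | h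
    · rw [h] at himg_ne; exact absurd himg_ne Set.not_nonempty_empty
    · exact h
  exact ⟨fun x _ => trivial, hinj, fun y _ => huniv ▸ Set.mem_univ y⟩
end
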